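/- Let G be a finite group, P a p-subgroup of G, and Q ≤ P with N_P(Q) a Sylow p-subgroup of N_G(Q). Then every subgroup of P that is G-conjugate to Q has normalizer in P of order at most |N_P(Q)|. -/

import Mathlib

/-- Let `P` be a `p`-subgroup of a finite group `G` and `Q ≤ P` with `N_P(Q)` a Sylow
`p`-subgroup of `N_G(Q)`.  Then every `G`-conjugate of `Q` contained in `P` has
normalizer in `P` of order at most `|N_P(Q)|`. -/
theorem fully_normalized_of_sylow_normalizer {G : Type*} [Group G] [Fintype G]
    {p : ℕ} [Fact p.Prime] (P Q : Subgroup G) (hP : IsPGroup p P) (hQP : Q ≤ P)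
    (hsyl : ∃ R : Sylow p (Subgroup.normalizer (Q : Set G)),
      (R : Subgroup (Subgroup.normalizer (Q : Set G))) = ((Subgroup.normalizer (Q : Set G)) ⊓ P).subgroupOf (Subgroup.normalizer (Q : Set G))) :
    ∀ g : G, Subgroup.map (MulAut.conj g).toMonoidHom Q ≤ P →
      Nat.card (Subgroup.normalizer (Subgroup.map (MulAut.conj g).toMonoidHom Q : Set G) ⊓ P : Subgroup G)
        ≤ Nat.card ((Subgroup.normalizer (Q : Set G)) ⊓ P : Subgroup G) := by
  intro g hg
  obtain ⟨R, hR⟩ := hsyl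
  set Q' := Subgroup.map (MulAut.conj g).toMonoidHom Q with hQ'def
  set K := Subgroup.map (MulAut.conj g⁻¹).toMonoidHom ((Subgroup.normalizer (Q' : Set G)) ⊓ P) with hKdef
  have hmapback : Subgroup.map (MulAut.conj g⁻¹).toMonoidHom Q' = Q := by
    rw [hQ'def, Subgroup.map_map]
    convert Subgroup.map_id Q
    ext x
    simp
    group
  have hKN : K ≤ (Subgroup.normalizer (Q : Set G)) := by
    calc K ≤ Subgroup.map (MulAut.conj g⁻¹).toMonoidHom (Subgroup.normalizer (Q' : Set G)) :=
            Subgroup.map_mono inf_le_left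
      _ = Subgroup.normalizer ((Subgroup.map (MulAut.conj g⁻¹).toMonoidHom Q' : Subgroup G) : Set G) :=
            Subgroup.map_equiv_normalizer_eq Q' (MulAut.conj g⁻¹)
      _ = (Subgroup.normalizer (Q : Set G)) := by rw [hmapback]
  have hKp : IsPGroup p K :=
    (hP.to_le inf_le_right).map _
  have hK'p : IsPGroup p (K.subgroupOf (Subgroup.normalizer (Q : Set G))) :=
    hKp.of_equiv (Subgroup.subgroupOfEquivOfLe hKN).symm
  obtain ⟨S, hS⟩ := hK'p.exists_le_sylow
  have h1 : Nat.card ((Subgroup.normalizer (Q' : Set G)) ⊓ P : Subgroup G) = Nat.card K :=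
    Nat.card_congr (Subgroup.equivMapOfInjective _ _
      (MulAut.conj g⁻¹).injective).toEquiv
  have h2 : Nat.card K = Nat.card (K.subgroupOf (Subgroup.normalizer (Q : Set G))) :=
    Nat.card_congr (Subgroup.subgroupOfEquivOfLe hKN).symm.toEquiv
  have h3 : Nat.card (K.subgroupOf (Subgroup.normalizer (Q : Set G))) ≤ Nat.card (S : Subgroup (Subgroup.normalizer (Q : Set G))) :=
    Subgroup.card_le_of_le hS
  have h4 : Nat.card (S : Subgroup (Subgroup.normalizer (Q : Set G))) = Nat.card (R : Subgroup (Subgroup.normalizer (Q : Set G))) := by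
    rw [Sylow.card_eq_multiplicity, Sylow.card_eq_multiplicity]
  have h5 : Nat.card (((Subgroup.normalizer (Q : Set G)) ⊓ P).subgroupOf (Subgroup.normalizer (Q : Set G)))
      = Nat.card ((Subgroup.normalizer (Q : Set G)) ⊓ P : Subgroup G) :=
    Nat.card_congr (Subgroup.subgroupOfEquivOfLe inf_le_left).toEquiv
  rw [h1, h2]
  calc Nat.card (K.subgroupOf (Subgroup.normalizer (Q : Set G))) ≤ Nat.card (S : Subgroup (Subgroup.normalizer (Q : Set G))) := h3
    _ = Nat.card (R : Subgroup (Subgroup.normalizer (Q : Set G))) := h4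
    _ = Nat.card ((Subgroup.normalizer (Q : Set G)) ⊓ P : Subgroup G) := by rw [hR, h5]
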